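/- arXiv:1408.5495 — 2 statements merged into one kernel-verified Lean document; each statement's English description precedes it below -/
import Mathlib

section
/- For every m ≥ 1 one has the concatenation identities E_{m+1,1} = E_{m,1}·δ_m·E_{m,1} and E_{m+1,2} = E_{m,1}·δ_m·E_{m,1}·δ_m·E_{m,1}, where δ_m is viewed as a one-letter word. -/
namespace PD

/-- The period-doubling substitution on the alphabet `Bool`,
where `false` stands for the letter `a` and `true` for the letter `b`:
`σ(a) = ab`, `σ(b) = aa`. -/
def sub : Bool → List Bool
  | false => [false, true]
  | true  => [false, false]

/-- The substitution applied to a finite word. -/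
def subW (w : List Bool) : List Bool := w.flatMap sub

/-- `A m = σ^m(a)`. -/
def A (m : ℕ) : List Bool := subW^[m] [false]

/-- `B m = σ^m(b)`. -/
def B (m : ℕ) : List Bool := subW^[m] [true]

/-- The doubling sequence `D∞` (0-indexed: `D n` is the `(n+1)`-th letter),
the fixed point of `σ` beginning with `a`; `A m` is a prefix of `A (m+1)`,
and `A (n+1)` has length `2^(n+1) > n`. -/
def D (n : ℕ) : Bool := (A (n + 1)).getD n false

/-- `δ m`, the last letter of `A m`. -/
def delta (m : ℕ) : Bool := (A m).getLastD false

/-- The envelope words (`i ∈ {1,2}`): `E m 1 = A m` minus its last letter,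
`E m 2 = A (m-1) ++ (A m` minus its last letter `)`. -/
def E (m i : ℕ) : List Bool :=
  if i = 1 then (A m).dropLast else A (m - 1) ++ (A m).dropLast

/-- `w` occurs at the (1-indexed) position `j` in the finite word `τ`. -/
def OccursIn (w τ : List Bool) (j : ℕ) : Prop :=
  1 ≤ j ∧ (τ.drop (j - 1)).take w.length = w

/-- `w` occurs at the (1-indexed) position `j` in the doubling sequence. -/
def OccursD (w : List Bool) (j : ℕ) : Prop :=
  1 ≤ j ∧ ∀ k < w.length, D (j - 1 + k) = w.getD k false

/-- `w` is a factor of the doubling sequence. -/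
def FactorD (w : List Bool) : Prop := ∃ j, OccursD w j

/-- `L w p`: the (1-indexed) starting position of the `p`-th occurrence of `w`
in the doubling sequence, occurrences being ordered by starting position.
(Each factor occurs infinitely often, so `Nat.nth` enumerates all occurrences
in increasing order.) -/
noncomputable def L (w : List Bool) (p : ℕ) : ℕ := Nat.nth (OccursD w) (p - 1)

/-- The strict total order on envelope words:
`E m₁ i₁ ⊏ E m₂ i₂` iff `m₁ < m₂`, or `m₁ = m₂` and `i₁ < i₂`. -/
def EnvLt (m₁ i₁ m₂ i₂ : ℕ) : Prop := m₁ < m₂ ∨ (m₁ = m₂ ∧ i₁ < i₂)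

/-- `Env(w) = E m i`: the envelope word `E m i` is the `⊏`-minimal envelope
word containing `w` as a factor. -/
def IsEnv (w : List Bool) (m i : ℕ) : Prop :=
  1 ≤ m ∧ (i = 1 ∨ i = 2) ∧ w <:+: E m i ∧
    ∀ m' i', 1 ≤ m' → (i' = 1 ∨ i' = 2) → EnvLt m' i' m i → ¬ w <:+: E m' i'

/-- The substitution `φ₁(a) = a`, `φ₁(b) = bb`. -/
def phi1 : Bool → List Bool
  | false => [false]
  | true  => [true, true]

/-- `Θ₁ = φ₁(D∞)` (0-indexed): `φ₁(A (n+1))` is a prefix of `Θ₁` of length `> n`. -/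
def Theta1 (n : ℕ) : Bool := ((A (n + 1)).flatMap phi1).getD n false

/-- The substitution `φ₂(a) = ab`, `φ₂(b) = acac`, over the alphabet `Fin 3`
where `0` stands for `a`, `1` for `b` and `2` for `c`. -/
def phi2 : Bool → List (Fin 3)
  | false => [0, 1]
  | true  => [0, 2, 0, 2]

/-- `Θ₂ = φ₂(D∞)` (0-indexed). -/
def Theta2 (n : ℕ) : Fin 3 := ((A (n + 1)).flatMap phi2).getD n 0

/-- `N₁(x,p)`: the number of letters `x` among the first `p` letters of `Θ₁`. -/
def N1 (x : Bool) (p : ℕ) : ℕ := ((List.range p).map Theta1).count x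

/-- `N₂(x,p)`: the number of letters `x` among the first `p` letters of `Θ₂`. -/
def N2 (x : Fin 3) (p : ℕ) : ℕ := ((List.range p).map Theta2).count x

end PD

open PD

lemma PD.A_succ (m : ℕ) : A (m + 1) = subW (A m) :=
  Function.iterate_succ_apply' subW m [false]

lemma PD.B_succ (m : ℕ) : B (m + 1) = subW (B m) :=
  Function.iterate_succ_apply' subW m [true]

lemma PD.subW_append (u v : List Bool) : subW (u ++ v) = subW u ++ subW v :=
  List.flatMap_append

lemma PD.A_succ_eq (m : ℕ) : A (m + 1) = A m ++ B m := by
  induction m with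
  | zero => rfl
  | succ n ih =>
    conv_lhs => rw [A_succ, ih, subW_append]
    rw [A_succ n, B_succ n]

lemma PD.B_succ_eq (m : ℕ) : B (m + 1) = A m ++ A m := by
  induction m with
  | zero => rfl
  | succ n ih =>
    conv_lhs => rw [B_succ, ih, subW_append]
    rw [A_succ n]

lemma PD.A_ne_nil (m : ℕ) : A m ≠ [] := by
  induction m with
  | zero => simp [A]
  | succ n ih => rw [A_succ_eq]; simp [ih]

lemma PD.B_ne_nil (m : ℕ) : B m ≠ [] := by
  cases m with
  | zero => simp [B]
  | succ n => rw [B_succ_eq]; simp [A_ne_nil]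

lemma PD.dropLast_B_eq (m : ℕ) (hm : 1 ≤ m) : (B m).dropLast = (A m).dropLast := by
  induction m with
  | zero => omega
  | succ n ih =>
    rw [B_succ_eq, A_succ_eq, List.dropLast_append_of_ne_nil (A_ne_nil n),
      List.dropLast_append_of_ne_nil (B_ne_nil n)]
    cases n with
    | zero => rfl
    | succ k => rw [ih (Nat.le_add_left 1 k)]

lemma PD.A_eq_dropLast (m : ℕ) : A m = (A m).dropLast ++ [delta m] := by
  have h := A_ne_nil m
  have : delta m = (A m).getLast h := by
    simp [delta, List.getLastD_eq_getLast?, List.getLast?_eq_getLast h]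
  rw [this, List.dropLast_append_getLast h]

open PD
/-- For every `m ≥ 1`, `E (m+1) 1 = E m 1 · δ_m · E m 1` and
`E (m+1) 2 = E m 1 · δ_m · E m 1 · δ_m · E m 1`. -/
theorem doubling_envelope_concat (m : ℕ) (hm : 1 ≤ m) :
    E (m + 1) 1 = E m 1 ++ [delta m] ++ E m 1 ∧
      E (m + 1) 2 = E m 1 ++ [delta m] ++ E m 1 ++ [delta m] ++ E m 1 := by
  have hE1 : ∀ k, E k 1 = (A k).dropLast := fun k => by simp [E]
  have hA : A m = (A m).dropLast ++ [delta m] := A_eq_dropLast m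
  have h1 : E (m + 1) 1 = E m 1 ++ [delta m] ++ E m 1 := by
    rw [hE1, hE1, A_succ_eq, List.dropLast_append_of_ne_nil (B_ne_nil m),
      dropLast_B_eq m hm]
    conv_lhs => rw [hA]
    simp [List.append_assoc]
  refine ⟨h1, ?_⟩
  have h2 : E (m + 1) 2 = A m ++ E (m + 1) 1 := by simp [E]
  rw [h2, h1, hE1]
  conv_lhs => rw [hA]
  simp [List.append_assoc]
end

section
/- For all m ≥ 1 and i ∈ {1,2}: (1) E_{m,1} is a factor of E_{m',i} for every m' ≥ m; (2) E_{m,2} is NOT a factor of E_{m+1,1} and not a factor of E_{m+1,2}; (3) E_{m,2} is a factor of E_{m'+2,i} for every m' ≥ m. -/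
namespace PD

lemma subW_cons (x : Bool) (l : List Bool) : subW (x :: l) = sub x ++ subW l :=
  List.flatMap_cons

lemma subW_append_s8 (l l' : List Bool) : subW (l ++ l') = subW l ++ subW l' :=
  List.flatMap_append

lemma subW_singleton (x : Bool) : subW [x] = sub x := by
  show sub x ++ [] = sub x
  rw [List.append_nil]

lemma A_succ_s8 (m : ℕ) : A (m + 1) = subW (A m) :=
  Function.iterate_succ_apply' subW m [false]

lemma B_succ_s8 (m : ℕ) : B (m + 1) = subW (B m) :=
  Function.iterate_succ_apply' subW m [true]

lemma AB : ∀ m, A (m + 1) = A m ++ B m ∧ B (m + 1) = A m ++ A m := by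
  intro m
  induction m with
  | zero => exact ⟨rfl, rfl⟩
  | succ n ih =>
    constructor
    · calc A (n + 1 + 1) = subW (A (n + 1)) := A_succ_s8 _
        _ = subW (A n ++ B n) := by rw [ih.1]
        _ = subW (A n) ++ subW (B n) := subW_append_s8 _ _
        _ = A (n + 1) ++ B (n + 1) := by rw [← A_succ_s8, ← B_succ_s8]
    · calc B (n + 1 + 1) = subW (B (n + 1)) := B_succ_s8 _
        _ = subW (A n ++ A n) := by rw [ih.2]
        _ = subW (A n) ++ subW (A n) := subW_append_s8 _ _
        _ = A (n + 1) ++ A (n + 1) := by rw [← A_succ_s8]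

lemma length_sub (x : Bool) : (sub x).length = 2 := by cases x <;> rfl

lemma length_subW (l : List Bool) : (subW l).length = 2 * l.length := by
  induction l with
  | nil => rfl
  | cons x l ih =>
    rw [subW_cons, List.length_append, length_sub, ih, List.length_cons]
    ring

lemma length_A (m : ℕ) : (A m).length = 2 ^ m := by
  induction m with
  | zero => rfl
  | succ n ih => rw [A_succ_s8, length_subW, ih, pow_succ]; ring

lemma length_B (m : ℕ) : (B m).length = 2 ^ m := by
  induction m with
  | zero => rfl
  | succ n ih => rw [B_succ_s8, length_subW, ih, pow_succ]; ring

lemma A_ne_nil_s8 (m : ℕ) : A m ≠ [] := by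
  apply List.ne_nil_of_length_pos
  rw [length_A]
  exact Nat.two_pow_pos m

lemma B_ne_nil_s8 (m : ℕ) : B m ≠ [] := by
  apply List.ne_nil_of_length_pos
  rw [length_B]
  exact Nat.two_pow_pos m

lemma A_prefix {m m' : ℕ} (h : m ≤ m') : A m <+: A m' := by
  induction m' with
  | zero =>
    rw [Nat.le_zero.mp h]
  | succ n ih =>
    rcases Nat.eq_or_lt_of_le h with rfl | h'
    · exact List.prefix_refl _
    · exact (ih (Nat.lt_succ_iff.mp h')).trans ⟨B n, (AB n).1.symm⟩

lemma dropLast_A_eq_B (m : ℕ) : (A m).dropLast = (B m).dropLast := by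
  induction m with
  | zero => rfl
  | succ n ih =>
    rw [(AB n).1, (AB n).2, List.dropLast_append_of_ne_nil (B_ne_nil_s8 n),
      List.dropLast_append_of_ne_nil (A_ne_nil_s8 n), ih]

lemma dropLast_A_prefix {m m' : ℕ} (h : m ≤ m') :
    (A m).dropLast <+: (A m').dropLast := by
  rcases Nat.eq_or_lt_of_le h with rfl | h'
  · exact List.prefix_refl _
  · refine (List.dropLast_prefix (A m)).trans ?_
    refine List.prefix_of_prefix_length_le (A_prefix h'.le) (List.dropLast_prefix _) ?_
    rw [length_A, List.length_dropLast, length_A]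
    have h2 : 2 ^ m < 2 ^ m' := Nat.pow_lt_pow_right (by norm_num) h'
    omega

lemma E1_def (m : ℕ) : E m 1 = (A m).dropLast := if_pos rfl

lemma E2_def (m : ℕ) : E m 2 = A (m - 1) ++ (A m).dropLast := if_neg (by norm_num)

lemma E2_succ (m : ℕ) (hm : 1 ≤ m) : E (m + 1) 2 = subW (E m 2) ++ [false] := by
  obtain ⟨k, rfl⟩ : ∃ k, m = k + 1 := ⟨m - 1, (Nat.succ_pred_eq_of_pos hm).symm⟩
  rw [E2_def, E2_def]
  simp only [Nat.add_sub_cancel]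
  rw [subW_append_s8, ← A_succ_s8]
  have hlast : (A (k + 1)).dropLast ++ [(A (k + 1)).getLast (A_ne_nil_s8 _)] = A (k + 1) :=
    List.dropLast_append_getLast _
  have h2 : (A (k + 1 + 1)).dropLast = subW ((A (k + 1)).dropLast) ++ [false] := by
    obtain ⟨c, hc⟩ : ∃ c, sub ((A (k + 1)).getLast (A_ne_nil_s8 _)) = [false, c] := by
      cases (A (k + 1)).getLast (A_ne_nil_s8 _) <;> exact ⟨_, rfl⟩
    calc (A (k + 1 + 1)).dropLast = (subW (A (k + 1))).dropLast := by rw [A_succ_s8]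
      _ = (subW ((A (k + 1)).dropLast ++ [(A (k + 1)).getLast (A_ne_nil_s8 _)])).dropLast := by
          rw [hlast]
      _ = (subW ((A (k + 1)).dropLast) ++ sub ((A (k + 1)).getLast (A_ne_nil_s8 _))).dropLast := by
          rw [subW_append_s8, subW_singleton]
      _ = subW ((A (k + 1)).dropLast) ++ [false] := by
          rw [hc, show ([false, c] : List Bool) = [false] ++ [c] from rfl,
            ← List.append_assoc, List.dropLast_concat]
  rw [h2, List.append_assoc]

lemma getD_singleton_false : ∀ j, ([false] : List Bool).getD j false = false := by
  intro j
  cases j with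
  | zero => rfl
  | succ n => rw [List.getD_cons_succ, List.getD_nil]

lemma subW_getD_even (l : List Bool) : ∀ k, (subW l).getD (2 * k) false = false := by
  induction l with
  | nil => intro k; exact List.getD_nil
  | cons x l ih =>
    intro k
    obtain ⟨c, hc⟩ : ∃ c, sub x = [false, c] := by cases x <;> exact ⟨_, rfl⟩
    rw [subW_cons, hc]
    cases k with
    | zero => rfl
    | succ n =>
      rw [show 2 * (n + 1) = 2 * n + 1 + 1 by ring]
      show (false :: c :: subW l).getD (2 * n + 1 + 1) false = false
      rw [List.getD_cons_succ, List.getD_cons_succ]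
      exact ih n

lemma subW_concat_getD_even (l : List Bool) (k : ℕ) :
    (subW l ++ [false]).getD (2 * k) false = false := by
  rcases lt_or_ge (2 * k) (subW l).length with h | h
  · rw [List.getD_append _ _ _ _ h]
    exact subW_getD_even l k
  · rw [List.getD_append_right _ _ _ _ h]
    exact getD_singleton_false _

lemma subW_split : ∀ x y z : List Bool, subW x = y ++ z → 2 ∣ y.length →
    ∃ x₁ x₂, x = x₁ ++ x₂ ∧ subW x₁ = y ∧ subW x₂ = z := by
  intro x
  induction x with
  | nil =>
    intro y z h _
    rw [show subW [] = [] from rfl] at h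
    obtain ⟨hy, hz⟩ := List.append_eq_nil_iff.mp h.symm
    exact ⟨[], [], rfl, by rw [hy]; rfl, by rw [hz]; rfl⟩
  | cons c x ih =>
    intro y z h hdvd
    rcases y with _ | ⟨y0, _ | ⟨y1, y⟩⟩
    · exact ⟨[], c :: x, rfl, rfl, by simpa using h⟩
    · norm_num at hdvd
    · obtain ⟨c1, hc⟩ : ∃ c1, sub c = [false, c1] := by cases c <;> exact ⟨_, rfl⟩
      rw [subW_cons, hc] at h
      simp only [List.cons_append, List.nil_append, List.cons.injEq] at h
      obtain ⟨h0, h1, hrest⟩ := h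
      have hd : 2 ∣ y.length := by
        simp only [List.length_cons] at hdvd
        omega
      obtain ⟨x₁, x₂, hx, hs, hz⟩ := ih y z hrest hd
      refine ⟨c :: x₁, x₂, by rw [hx, List.cons_append], ?_, hz⟩
      rw [subW_cons, hc, hs, ← h0, ← h1]
      rfl

lemma subW_inj : ∀ x y : List Bool, subW x = subW y → x = y := by
  intro x
  induction x with
  | nil =>
    intro y h
    cases y with
    | nil => rfl
    | cons d y =>
      have hl := congrArg List.length h
      rw [length_subW, length_subW] at hl
      simp at hl
  | cons c x ih =>
    intro y h
    cases y with
    | nil =>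
      have hl := congrArg List.length h
      rw [length_subW, length_subW] at hl
      simp at hl
    | cons d y =>
      rw [subW_cons, subW_cons] at h
      cases c <;> cases d <;> simp [sub] at h ⊢ <;> exact ih y h

lemma A1_prefix {m : ℕ} (hm : 1 ≤ m) : ∃ r, A m = false :: true :: r := by
  obtain ⟨r, hr⟩ := A_prefix hm
  exact ⟨r, by rw [← hr]; rfl⟩

lemma E2_getD_one {m : ℕ} (hm : 2 ≤ m) : (E m 2).getD 1 false = true := by
  rw [E2_def]
  obtain ⟨r, hr⟩ := A1_prefix (show 1 ≤ m - 1 by omega)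
  rw [hr]
  rfl

lemma length_E2 (m : ℕ) : (E m 2).length = 2 ^ (m - 1) + (2 ^ m - 1) := by
  rw [E2_def, List.length_append, length_A, List.length_dropLast, length_A]

lemma not_E2 : ∀ m, 1 ≤ m → ¬ E m 2 <:+: E (m + 1) 2 := by
  intro m
  induction m with
  | zero => omega
  | succ n ih =>
    cases n with
    | zero => intro _; decide
    | succ k =>
      intro _ hinf
      obtain ⟨s, u, hsu0⟩ := hinf
      have hsu : s ++ E (k + 2) 2 ++ u = E (k + 3) 2 := hsu0
      have hw : E (k + 2) 2 = subW (E (k + 1) 2) ++ [false] :=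
        E2_succ (k + 1) (by omega)
      have hT : E (k + 3) 2 = subW (E (k + 2) 2) ++ [false] :=
        E2_succ (k + 2) (by omega)
      have hlw : 1 < (E (k + 2) 2).length := by
        rw [length_E2, show k + 2 - 1 = k + 1 from rfl]
        have h4 : 2 ^ 1 ≤ 2 ^ (k + 1) := Nat.pow_le_pow_right (by norm_num) (by omega)
        norm_num at h4
        omega
      have hpar : 2 ∣ s.length := by
        rcases Nat.even_or_odd s.length with he | ho
        · obtain ⟨q, hq⟩ := he
          exact ⟨q, by omega⟩
        · exfalso
          obtain ⟨q, hq⟩ := ho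
          have h1 : (E (k + 3) 2).getD (s.length + 1) false = true := by
            rw [← hsu, List.append_assoc,
              List.getD_append_right _ _ _ _ (by omega), Nat.add_sub_cancel_left,
              List.getD_append _ _ _ _ hlw]
            exact E2_getD_one (by omega)
          rw [hT] at h1
          have h2 : (subW (E (k + 2) 2) ++ [false]).getD (2 * (q + 1)) false = false :=
            subW_concat_getD_even _ _
          rw [show 2 * (q + 1) = s.length + 1 by omega] at h2
          rw [h1] at h2
          simp at h2
      obtain ⟨q, hq⟩ := hpar
      have hpre1 : s ++ subW (E (k + 1) 2) <+: E (k + 3) 2 := by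
        refine ⟨[false] ++ u, ?_⟩
        rw [← hsu, hw]
        simp [List.append_assoc]
      have hpre2 : subW (E (k + 2) 2) <+: E (k + 3) 2 := ⟨[false], hT.symm⟩
      have hlen : (s ++ subW (E (k + 1) 2)).length ≤ (subW (E (k + 2) 2)).length := by
        have hTl : (E (k + 3) 2).length = (subW (E (k + 2) 2)).length + 1 := by
          rw [hT]; simp
        have hwl : (E (k + 2) 2).length = (subW (E (k + 1) 2)).length + 1 := by
          rw [hw]; simp
        have hy : (subW (E (k + 2) 2)).length = 2 * (E (k + 2) 2).length := length_subW _
        have hsul := congrArg List.length hsu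
        simp only [List.length_append] at hsul
        rw [List.length_append]
        omega
      obtain ⟨r, hr⟩ := List.prefix_of_prefix_length_le hpre1 hpre2 hlen
      rw [List.append_assoc] at hr
      obtain ⟨x₁, x₂, hx, hs1, hs2⟩ :=
        subW_split (E (k + 2) 2) s (subW (E (k + 1) 2) ++ r) hr.symm ⟨q, hq⟩
      obtain ⟨x₃, x₄, hx2, hs3, hs4⟩ :=
        subW_split x₂ (subW (E (k + 1) 2)) r hs2 ⟨(E (k + 1) 2).length, length_subW _⟩
      have hx3 : x₃ = E (k + 1) 2 := subW_inj _ _ hs3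
      refine ih (by omega) ⟨x₁, x₄, ?_⟩
      show x₁ ++ E (k + 1) 2 ++ x₄ = E (k + 2) 2
      rw [← hx3, List.append_assoc, ← hx2, ← hx]

lemma E1_suffix_E2 (m : ℕ) : E m 1 <:+ E m 2 := by
  rw [E1_def, E2_def]
  exact ⟨A (m - 1), rfl⟩

lemma E1_infix {m m' : ℕ} (h : m ≤ m') : ∀ i : ℕ, i = 1 ∨ i = 2 → E m 1 <:+: E m' i := by
  intro i hi
  have h1 : E m 1 <+: E m' 1 := by
    rw [E1_def, E1_def]
    exact dropLast_A_prefix h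
  rcases hi with rfl | rfl
  · exact h1.isInfix
  · exact h1.isInfix.trans (E1_suffix_E2 m').isInfix

lemma infix_dropLast {w l : List Bool} (s t : List Bool) (ht : t ≠ [])
    (h : s ++ (w ++ t) = l) : w <:+: l.dropLast := by
  refine ⟨s, t.dropLast, ?_⟩
  rw [← h, List.dropLast_append_of_ne_nil (fun hc => ht (List.append_eq_nil_iff.mp hc).2),
    List.dropLast_append_of_ne_nil ht, List.append_assoc]

lemma E2_infix_E1 (m : ℕ) (hm : 1 ≤ m) : E m 2 <:+: E (m + 2) 1 := by
  obtain ⟨k, rfl⟩ : ∃ k, m = k + 1 := ⟨m - 1, (Nat.succ_pred_eq_of_pos hm).symm⟩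
  rw [E1_def]
  have hδ : (A k).dropLast ++ [(A k).getLast (A_ne_nil_s8 k)] = A k :=
    List.dropLast_append_getLast _
  have h1 : (A (k + 1)).dropLast = A k ++ (A k).dropLast := by
    rw [(AB k).1, List.dropLast_append_of_ne_nil (B_ne_nil_s8 k), ← dropLast_A_eq_B]
  have hE2 : E (k + 1) 2 = A k ++ (A k ++ (A k).dropLast) := by
    rw [E2_def]
    simp only [Nat.add_sub_cancel]
    rw [h1]
  have hback : A (k + 1 + 2) =
      (A k ++ B k) ++ ((A k ++ A k) ++ ((A k ++ B k) ++ (A k ++ B k))) := by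
    calc A (k + 1 + 2) = A (k + 2) ++ B (k + 2) := (AB (k + 2)).1
      _ = (A (k + 1) ++ B (k + 1)) ++ (A (k + 1) ++ A (k + 1)) := by
          rw [(AB (k + 1)).1, (AB (k + 1)).2]
      _ = _ := by rw [(AB k).1, (AB k).2, List.append_assoc]
  have hδ' : ∀ X : List Bool,
      (A k).dropLast ++ ((A k).getLast (A_ne_nil_s8 k) :: X) = A k ++ X := by
    intro X
    rw [List.append_cons, hδ]
  refine infix_dropLast (A (k + 1)) ([(A k).getLast (A_ne_nil_s8 k)] ++ (B k ++ A (k + 1)))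
    (by simp) ?_
  rw [hback, hE2, (AB k).1]
  simp only [List.append_assoc, List.cons_append, List.nil_append, hδ']

lemma E2_infix {m m' : ℕ} (hm : 1 ≤ m) (h : m ≤ m') :
    ∀ i : ℕ, i = 1 ∨ i = 2 → E m 2 <:+: E (m' + 2) i := by
  intro i hi
  have h1 : E m 2 <:+: E (m' + 2) 1 := by
    refine (E2_infix_E1 m hm).trans ?_
    rw [E1_def, E1_def]
    exact (dropLast_A_prefix (by omega)).isInfix
  rcases hi with rfl | rfl
  · exact h1
  · exact h1.trans (E1_suffix_E2 _).isInfix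

end PD

open PD
/-- For every `m ≥ 1` and `i ∈ {1,2}`: (1) `E m 1` is a factor of `E m' i` for all
`m' ≥ m`; (2) `E m 2` is not a factor of `E (m+1) i`; (3) `E m 2` is a factor of
`E (m'+2) i` for all `m' ≥ m`. -/
theorem doubling_envelope_factors (m : ℕ) (hm : 1 ≤ m) :
    (∀ m', m ≤ m' → ∀ i : ℕ, i = 1 ∨ i = 2 → E m 1 <:+: E m' i) ∧
      (∀ i : ℕ, i = 1 ∨ i = 2 → ¬ E m 2 <:+: E (m + 1) i) ∧
      (∀ m', m ≤ m' → ∀ i : ℕ, i = 1 ∨ i = 2 → E m 2 <:+: E (m' + 2) i) := by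
  refine ⟨fun m' h i hi => E1_infix h i hi, fun i hi => ?_, fun m' h i hi => E2_infix hm h i hi⟩
  rcases hi with rfl | rfl
  · intro hcon
    exact not_E2 m hm (hcon.trans (E1_suffix_E2 (m + 1)).isInfix)
  · exact not_E2 m hm
end
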